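/- Let r > 0, let n ≥ 7 be an integer, set D = r / sin(π/n), and define p_k = (D·cos(2πk/n), D·sin(2πk/n)) for k = 0, …, n−1. Then for every k, every t ≥ 0 and every j ≠ k: ‖p_k + (t/D)·p_k − p_j‖ ≥ 2r > r, and ‖p_k + (t/D)·p_k‖ ≥ D > r. Hence the outward radial ray from p_k does not intersect the closed disk of radius r centered at any other ring point p_j, nor the closed disk of radius r centered at the origin. -/

import Mathlib

open Real Metric

noncomputable def pt (a b : ℝ) : EuclideanSpace ℝ (Fin 2) := WithLp.toLp 2 ![a, b]

noncomputable def ringPt (D : ℝ) (n : ℕ) (k : Fin n) : EuclideanSpace ℝ (Fin 2) :=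
  pt (D * Real.cos (2 * π * k / n)) (D * Real.sin (2 * π * k / n))

lemma norm_pt (a b : ℝ) : ‖pt a b‖ = Real.sqrt (a^2 + b^2) := by
  simp [pt, EuclideanSpace.norm_eq, Fin.sum_univ_two, Real.norm_eq_abs, sq_abs]
lemma ray_pt (D c : ℝ) (n : ℕ) (k : Fin n) :
    ringPt D n k + c • ringPt D n k =
      pt ((1+c) * (D * Real.cos (2 * π * k / n))) ((1+c) * (D * Real.sin (2 * π * k / n))) := by
  ext i; fin_cases i <;> simp [ringPt, pt] <;> ring
lemma ray_sub_pt (D c : ℝ) (n : ℕ) (k j : Fin n) :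
    ringPt D n k + c • ringPt D n k - ringPt D n j =
      pt ((1+c) * (D * Real.cos (2 * π * k / n)) - D * Real.cos (2 * π * j / n))
         ((1+c) * (D * Real.sin (2 * π * k / n)) - D * Real.sin (2 * π * j / n)) := by
  ext i; fin_cases i <;> simp [ringPt, pt] <;> ring

lemma sin_mono_aux (n m : ℕ) (hn : 2 ≤ n) (hm1 : 1 ≤ m) (hm2 : m < n) :
    Real.sin (π / n) ≤ Real.sin (π * m / n) := by
  have hn0 : (0:ℝ) < n := by
    have : 0 < n := by omega
    exact_mod_cast this
  have hm0 : (1:ℝ) ≤ m := by exact_mod_cast hm1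
  have hmn : (m:ℝ) ≤ (n:ℝ) - 1 := by
    have : (m:ℝ) + 1 ≤ n := by exact_mod_cast hm2
    linarith
  have hπn0 : 0 < π / n := div_pos pi_pos hn0
  have hx1 : π / n ≤ π * m / n := by
    rw [div_le_div_iff₀ hn0 hn0]
    nlinarith [mul_nonneg (mul_pos pi_pos hn0).le (by linarith : (0:ℝ) ≤ (m:ℝ) - 1)]
  have hub : π * m / n ≤ π - π / n := by
    have h1 : π * m / n ≤ π * ((n:ℝ)-1) / n := by gcongr
    have h2 : π * ((n:ℝ)-1) / n = π - π / n := by field_simp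
    linarith
  rcases le_or_gt (π * m / n) (π / 2) with h | h
  · exact Real.sin_le_sin_of_le_of_le_pi_div_two (by linarith) h hx1
  · nth_rewrite 2 [← Real.sin_pi_sub]
    exact Real.sin_le_sin_of_le_of_le_pi_div_two (by linarith) (by linarith) (by linarith)

lemma sin_sq_mono_aux (n m : ℕ) (hn : 2 ≤ n) (hm1 : 1 ≤ m) (hm2 : m < n) :
    Real.sin (π / n) ^ 2 ≤ Real.sin (π * m / n) ^ 2 := by
  have hn0 : (0:ℝ) < n := by
    have : 0 < n := by omega
    exact_mod_cast this
  have hs0 : 0 ≤ Real.sin (π / n) := by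
    apply Real.sin_nonneg_of_nonneg_of_le_pi (le_of_lt (div_pos pi_pos hn0))
    have hn1 : (1:ℝ) ≤ n := by exact_mod_cast (by omega : 1 ≤ n)
    rw [div_le_iff₀ hn0]
    nlinarith [pi_pos]
  exact pow_le_pow_left₀ hs0 (sin_mono_aux n m hn hm1 hm2) 2

lemma sin_sq_key (n : ℕ) (hn : 2 ≤ n) (k j : Fin n) (hjk : (k:ℕ) ≠ (j:ℕ)) :
    Real.sin (π / n) ^ 2 ≤ Real.sin (π * (((k:ℕ):ℝ) - ((j:ℕ):ℝ)) / n) ^ 2 := by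
  rcases le_total ((j:ℕ)) ((k:ℕ)) with h | h
  · have hcast : (((k:ℕ):ℝ) - ((j:ℕ):ℝ)) = (((k:ℕ) - (j:ℕ) : ℕ) : ℝ) := by
      push_cast [h]; ring
    rw [hcast]
    exact sin_sq_mono_aux n _ hn (by omega) (by omega)
  · have hcast : π * (((k:ℕ):ℝ) - ((j:ℕ):ℝ)) / n
        = -(π * (((j:ℕ) - (k:ℕ) : ℕ) : ℝ) / n) := by
      push_cast [h]; ring
    rw [hcast, Real.sin_neg, neg_pow]
    simpa using sin_sq_mono_aux n ((j:ℕ) - (k:ℕ)) hn (by omega) (by omega)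


/-- In the bot-in-the-middle counterexample with `n ≥ 7` and `D = r / sin(π/n)`, the outward
radial ray from any ring robot stays at distance `≥ 2r > r` from every other ring point and
at distance `≥ D > r` from the origin: no ring robot ever sees any other robot. -/
theorem ring_robot_sees_nothing (r : ℝ) (hr : 0 < r) (n : ℕ) (hn : 7 ≤ n) :
    ∀ k : Fin n, ∀ t : ℝ, 0 ≤ t →
      (∀ j : Fin n, j ≠ k →
        ‖ringPt (r / Real.sin (π / n)) n k +
            (t / (r / Real.sin (π / n))) • ringPt (r / Real.sin (π / n)) n k -
            ringPt (r / Real.sin (π / n)) n j‖ ≥ 2 * r) ∧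
      2 * r > r ∧
      ‖ringPt (r / Real.sin (π / n)) n k +
          (t / (r / Real.sin (π / n))) • ringPt (r / Real.sin (π / n)) n k‖ ≥
        r / Real.sin (π / n) ∧
      r / Real.sin (π / n) > r := by
  have hn0 : (0:ℝ) < n := by
    have : 0 < n := by omega
    exact_mod_cast this
  have hn2 : (2:ℝ) < n := by
    have : (7:ℝ) ≤ n := by exact_mod_cast hn
    linarith
  set s := Real.sin (π / n) with hs
  have hπn0 : 0 < π / n := div_pos pi_pos hn0
  have hπn2 : π / n < π / 2 := by
    rw [div_lt_div_iff₀ hn0 (by norm_num)]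
    nlinarith [pi_pos]
  have hs0 : 0 < s := Real.sin_pos_of_pos_of_lt_pi hπn0 (by linarith [pi_pos])
  have hs1 : s < 1 := by
    have := Real.strictMonoOn_sin ⟨by linarith, hπn2.le⟩
      ⟨by linarith [pi_pos], le_refl (π/2)⟩ hπn2
    rwa [Real.sin_pi_div_two] at this
  set D := r / s with hD
  have hD0 : 0 < D := div_pos hr hs0
  have hDs : D * s = r := div_mul_cancel₀ r hs0.ne'
  have hDr : r < D := by
    rw [hD, lt_div_iff₀ hs0]
    nlinarith
  intro k t ht
  set c := t / D with hc
  have hc0 : 0 ≤ c := div_nonneg ht hD0.le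
  clear_value s D c
  refine ⟨?_, by linarith, ?_, hDr⟩
  · intro j hjk
    rw [ray_sub_pt, norm_pt]
    set α := 2 * π * ((k:ℕ):ℝ) / n with hα
    set β := 2 * π * ((j:ℕ):ℝ) / n with hβ
    set ψ := π * (((k:ℕ):ℝ) - ((j:ℕ):ℝ)) / n with hψ
    clear_value α β ψ
    have hE : ((1+c) * (D * Real.cos α) - D * Real.cos β)^2 +
        ((1+c) * (D * Real.sin α) - D * Real.sin β)^2 =
        D^2 * ((1+c)^2 + 1 - 2*(1+c) * Real.cos (α - β)) := by
      rw [Real.cos_sub]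
      linear_combination ((1+c)*D)^2 * Real.sin_sq_add_cos_sq α +
        D^2 * Real.sin_sq_add_cos_sq β
    have hαβ : α - β = 2 * ψ := by rw [hα, hβ, hψ]; ring
    have hcos : Real.cos (α - β) = 1 - 2 * Real.sin ψ ^ 2 := by
      rw [hαβ, Real.cos_two_mul]
      linear_combination 2 * Real.sin_sq_add_cos_sq ψ
    have hkey : s ^ 2 ≤ Real.sin ψ ^ 2 := by
      rw [hψ, hs]
      exact sin_sq_key n (by omega) k j (Fin.val_ne_iff.mpr (Ne.symm hjk))
    have hsinub : Real.sin ψ ^ 2 ≤ 1 := by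
      nlinarith [Real.sin_sq_add_cos_sq ψ, sq_nonneg (Real.cos ψ)]
    have hr2 : r ^ 2 = D ^ 2 * s ^ 2 := by rw [← hDs]; ring
    have hE2 : (2 * r) ^ 2 ≤ ((1+c) * (D * Real.cos α) - D * Real.cos β)^2 +
        ((1+c) * (D * Real.sin α) - D * Real.sin β)^2 := by
      rw [hE, hcos]
      have h1 : D^2 * s^2 ≤ D^2 * Real.sin ψ ^ 2 :=
        mul_le_mul_of_nonneg_left hkey (sq_nonneg D)
      have h2 : 0 ≤ c * D^2 * Real.sin ψ ^ 2 :=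
        mul_nonneg (mul_nonneg hc0 (sq_nonneg D)) (sq_nonneg _)
      have h4 : (2*r)^2 = 4*(D^2*s^2) := by linear_combination 4 * hr2
      have hexp : D^2 * ((1+c)^2 + 1 - 2*(1+c)*(1 - 2*Real.sin ψ^2))
          = D^2*c^2 + 4*(D^2 * Real.sin ψ^2) + 4*(c * D^2 * Real.sin ψ^2) := by ring
      rw [hexp]
      linarith [h1, h2, h4, sq_nonneg (D*c)]
    calc (2 : ℝ) * r = Real.sqrt ((2 * r) ^ 2) := (Real.sqrt_sq (by linarith)).symm
      _ ≤ _ := Real.sqrt_le_sqrt hE2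
  · rw [ray_pt, norm_pt]
    set α := 2 * π * ((k:ℕ):ℝ) / n with hα
    clear_value α
    have hEq : ((1+c) * (D * Real.cos α))^2 + ((1+c) * (D * Real.sin α))^2
        = ((1+c) * D)^2 := by
      linear_combination ((1+c)*D)^2 * Real.sin_sq_add_cos_sq α
    have hcD : D ≤ (1+c) * D := by nlinarith [mul_nonneg hc0 hD0.le]
    rw [hEq, Real.sqrt_sq (by linarith)]
    linarith
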